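/- Let n ≥ 2 and k₂, k₃, ℓ₂, ℓ₃ ≥ 0 be integers. The number L(n,k₂,k₃,ℓ₂,ℓ₃) of rooted reduced graph structures on Fin n of combinatorial type (n,k₂,k₃,ℓ₂,ℓ₃) satisfies L(n,k₂,k₃,ℓ₂,ℓ₃) = n · s(n,k₂,k₃,ℓ₂,ℓ₃) + (ℓ₂+1) · s(n,k₂,k₃,ℓ₂+1,ℓ₃) + (ℓ₃+1) · s(n,k₂,k₃,ℓ₂,ℓ₃+1). -/

import Mathlib

/-- A rooted reduced graph structure on `Fin n`: maps `A` (symmetric) and `B` (injective on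
its domain, triangle condition), root `v₀`, every non-root vertex is `a`-adjacent and
`b`-adjacent, and the structure is connected. -/
def IsRootedRed {n : ℕ} (A B : Fin n → Option (Fin n)) (v0 : Fin n) : Prop :=
  (∀ v w, A v = some w ↔ A w = some v) ∧
  (∀ v w u, B v = some u → B w = some u → v = w) ∧
  (∀ v w u, B v = some w → B w = some u → B u = some v) ∧
  (∀ v, v ≠ v0 → A v ≠ none ∧ (B v ≠ none ∨ ∃ u, B u = some v)) ∧
  (∀ v w : Fin n, Relation.EqvGen (fun x y => A x = some y ∨ B x = some y) v w)

/-- A cyclically reduced graph structure on `Fin n`: like a rooted reduced graph structure,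
but every vertex (including the root) is `a`-adjacent and `b`-adjacent; no root is recorded. -/
def IsCycRed' {n : ℕ} (A B : Fin n → Option (Fin n)) : Prop :=
  (∀ v w, A v = some w ↔ A w = some v) ∧
  (∀ v w u, B v = some u → B w = some u → v = w) ∧
  (∀ v w u, B v = some w → B w = some u → B u = some v) ∧
  (∀ v, A v ≠ none ∧ (B v ≠ none ∨ ∃ u, B u = some v)) ∧
  (∀ v w : Fin n, Relation.EqvGen (fun x y => A x = some y ∨ B x = some y) v w)

/-- The pair `(A, B)` has combinatorial type `(n, k₂, k₃, ℓ₂, ℓ₃)`: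
`k₂` isolated `a`-edges, `k₃` isolated `b`-edges, `ℓ₂` `a`-loops, `ℓ₃` `b`-loops. -/
def HasCombType {n : ℕ} (A B : Fin n → Option (Fin n)) (k2 k3 l2 l3 : ℕ) : Prop :=
  Nat.card {v : Fin n // ∃ w, v ≠ w ∧ A v = some w} = 2 * k2 ∧
  Nat.card {v : Fin n // ∃ w, v ≠ w ∧ B v = some w ∧ B w = none} = k3 ∧
  Nat.card {v : Fin n // A v = some v} = l2 ∧
  Nat.card {v : Fin n // B v = some v} = l3

/-- The number of rooted reduced graph structures on `Fin n` of combinatorial type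
`(n, k₂, k₃, ℓ₂, ℓ₃)`. -/
noncomputable def L (n k2 k3 l2 l3 : ℕ) : ℕ :=
  Nat.card {t : (Fin n → Option (Fin n)) × (Fin n → Option (Fin n)) × Fin n //
    IsRootedRed t.1 t.2.1 t.2.2 ∧ HasCombType t.1 t.2.1 k2 k3 l2 l3}

/-- The number of cyclically reduced graph structures on `Fin n` of combinatorial type
`(n, k₂, k₃, ℓ₂, ℓ₃)`. -/
noncomputable def s (n k2 k3 l2 l3 : ℕ) : ℕ :=
  Nat.card {p : (Fin n → Option (Fin n)) × (Fin n → Option (Fin n)) //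
    IsCycRed' p.1 p.2 ∧ HasCombType p.1 p.2 k2 k3 l2 l3}


open Relation Function

-- generic card lemmas
lemma card_or_disj {α : Type} [Finite α] (p q : α → Prop) (h : ∀ a, p a → q a → False) :
    Nat.card {x // p x ∨ q x} = Nat.card {x // p x} + Nat.card {x // q x} := by
  classical
  rw [← Nat.card_sum]
  exact Nat.card_congr
    ⟨fun x => if hx : p x.1 then Sum.inl ⟨x.1, hx⟩ else Sum.inr ⟨x.1, x.2.resolve_left hx⟩,
     Sum.elim (fun a => ⟨a.1, Or.inl a.2⟩) (fun b => ⟨b.1, Or.inr b.2⟩),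
     fun x => by by_cases hx : p x.1 <;> simp [hx],
     fun x => by
       cases x with
       | inl a => simp [a.2]
       | inr b => have : ¬ p b.1 := fun hp => h _ hp b.2; simp [this]⟩

lemma card_eq_single {α : Type} [Finite α] (u : α) : Nat.card {x // x = u} = 1 := by
  classical
  cases nonempty_fintype α
  rw [Nat.card_eq_fintype_card, Fintype.card_subtype_eq]

lemma card_sigma_const {ι : Type} [Finite ι] (f : ι → Type) [∀ i, Finite (f i)] (m : ℕ)
    (h : ∀ i, Nat.card (f i) = m) : Nat.card (Σ i, f i) = Nat.card ι * m := by
  classical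
  cases nonempty_fintype ι
  letI : ∀ i, Fintype (f i) := fun i => Fintype.ofFinite _
  rw [Nat.card_eq_fintype_card, Nat.card_eq_fintype_card, Fintype.card_sigma]
  calc ∑ i, Fintype.card (f i) = ∑ _i : ι, m := by
        refine Finset.sum_congr rfl fun i _ => ?_
        rw [← Nat.card_eq_fintype_card, h]
    _ = Fintype.card ι * m := by simp [Finset.sum_const, mul_comm]

lemma eqvGen_of_le {α : Type} {r r' : α → α → Prop} (h : ∀ x y, r x y → EqvGen r' x y)
    {v w : α} (hvw : EqvGen r v w) : EqvGen r' v w := by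
  induction hvw with
  | rel x y hxy => exact h x y hxy
  | refl x => exact .refl x
  | symm x y _ ih => exact .symm _ _ ih
  | trans x y z _ _ ih1 ih2 => exact .trans _ _ _ ih1 ih2

variable {n k2 k3 l2 l3 : ℕ} {A B : Fin n → Option (Fin n)} {v0 : Fin n}

lemma root_bAdj (hn : 2 ≤ n) (h : IsRootedRed A B v0) (hA : A v0 = none) :
    B v0 ≠ none ∨ ∃ u, B u = some v0 := by
  by_contra hB
  push_neg at hB
  obtain ⟨hB1, hB2⟩ := hB
  obtain ⟨h1, _, _, _, h5⟩ := h
  obtain ⟨w, hw⟩ := Fintype.exists_ne_of_one_lt_card (by simp; omega) v0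
  have key : ∀ x y : Fin n, EqvGen (fun x y => A x = some y ∨ B x = some y) x y →
      (x = v0 ↔ y = v0) := by
    intro x y hxy
    induction hxy with
    | rel x y hxy =>
      constructor
      · rintro rfl
        rcases hxy with h' | h'
        · rw [hA] at h'; exact nomatch h'
        · rw [hB1] at h'; exact nomatch h'
      · rintro rfl
        rcases hxy with h' | h'
        · rw [h1, hA] at h'; exact nomatch h'
        · exact absurd h' (hB2 x)
    | refl x => exact Iff.rfl
    | symm x y _ ih => exact ih.symm
    | trans x y z _ _ ih1 ih2 => exact ih1.trans ih2
  exact hw ((key v0 w (h5 v0 w)).mp rfl)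

lemma case2_fwd (hn : 2 ≤ n) (h : IsRootedRed A B v0) (ht : HasCombType A B k2 k3 l2 l3)
    (hA : A v0 = none) :
    IsCycRed' (update A v0 (some v0)) B ∧
      HasCombType (update A v0 (some v0)) B k2 k3 (l2 + 1) l3 := by
  obtain ⟨h1, h2, h3, h4, h5⟩ := h
  have hAv : ∀ v, v ≠ v0 → update A v0 (some v0) v = A v := fun v hv => update_of_ne hv _ _
  have hnot : ∀ v, A v ≠ some v0 := by
    intro v hv
    rw [h1, hA] at hv; exact nomatch hv
  have hsymm : ∀ v w, update A v0 (some v0) v = some w ↔ update A v0 (some v0) w = some v := by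
    intro v w
    by_cases hv : v = v0 <;> by_cases hw : w = v0
    · rw [hv, hw]
    · rw [hv, update_self, hAv w hw]
      exact ⟨fun h' => absurd (Option.some_inj.mp h').symm hw, fun h' => absurd h' (hnot w)⟩
    · rw [hw, update_self, hAv v hv]
      exact ⟨fun h' => absurd h' (hnot v), fun h' => absurd (Option.some_inj.mp h').symm hv⟩
    · rw [hAv v hv, hAv w hw]; exact h1 v w
  have hadj : ∀ v, update A v0 (some v0) v ≠ none ∧ (B v ≠ none ∨ ∃ u, B u = some v) := by
    intro v
    rcases eq_or_ne v v0 with rfl | hv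
    · refine ⟨by simp, root_bAdj hn ⟨h1, h2, h3, h4, h5⟩ hA⟩
    · obtain ⟨ha, hb⟩ := h4 v hv
      exact ⟨by rwa [hAv v hv], hb⟩
  have hconn : ∀ v w, EqvGen (fun x y => update A v0 (some v0) x = some y ∨ B x = some y) v w := by
    intro v w
    refine eqvGen_of_le ?_ (h5 v w)
    intro x y hxy
    refine EqvGen.rel _ _ ?_
    rcases hxy with hx | hx
    · left
      have hx0 : x ≠ v0 := by rintro rfl; rw [hA] at hx; exact nomatch hx
      rwa [hAv x hx0]
    · right; exact hx
  obtain ⟨t1, t2, t3, t4⟩ := ht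
  refine ⟨⟨hsymm, h2, h3, hadj, hconn⟩, ?_, t2, ?_, t4⟩
  · rw [← t1]
    refine Nat.card_congr (Equiv.subtypeEquivRight fun v => ?_)
    constructor
    · rintro ⟨w, hvw, hw⟩
      rcases eq_or_ne v v0 with rfl | hv
      · rw [update_self] at hw; exact absurd (Option.some_inj.mp hw) hvw
      · exact ⟨w, hvw, by rwa [hAv v hv] at hw⟩
    · rintro ⟨w, hvw, hw⟩
      have hv0 : v ≠ v0 := by rintro rfl; rw [hA] at hw; exact nomatch hw
      exact ⟨w, hvw, by rwa [hAv v hv0]⟩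
  · have key : ∀ v, update A v0 (some v0) v = some v ↔ (A v = some v ∨ v = v0) := by
      intro v
      rcases eq_or_ne v v0 with rfl | hv
      · simp
      · simp [hAv v hv, hv]
    rw [Nat.card_congr (Equiv.subtypeEquivRight key),
      card_or_disj _ _ (fun a ha hav => by rw [hav, hA] at ha; exact nomatch ha),
      t3, card_eq_single]

lemma case2_bwd {u : Fin n} (h : IsCycRed' A B) (ht : HasCombType A B k2 k3 (l2 + 1) l3)
    (hu : A u = some u) :
    IsRootedRed (update A u none) B u ∧ HasCombType (update A u none) B k2 k3 l2 l3 := by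
  obtain ⟨h1, h2, h3, h4, h5⟩ := h
  have hnot : ∀ v, v ≠ u → A v ≠ some u := by
    intro v hv hvu
    rw [h1, hu] at hvu
    exact hv (Option.some_inj.mp hvu).symm
  have hAv : ∀ v, v ≠ u → update A u none v = A v := fun v hv => update_of_ne hv _ _
  have hsymm : ∀ v w, update A u none v = some w ↔ update A u none w = some v := by
    intro v w
    by_cases hv : v = u <;> by_cases hw : w = u
    · rw [hv, hw]
    · rw [hv, update_self, hAv w hw]
      exact ⟨fun h' => (nomatch h'), fun h' => absurd h' (hnot w hw)⟩
    · rw [hw, update_self, hAv v hv]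
      exact ⟨fun h' => absurd h' (hnot v hv), fun h' => nomatch h'⟩
    · rw [hAv v hv, hAv w hw]; exact h1 v w
  have hconn : ∀ v w, EqvGen (fun x y => update A u none x = some y ∨ B x = some y) v w := by
    intro v w
    refine eqvGen_of_le ?_ (h5 v w)
    intro x y hxy
    rcases hxy with hx | hx
    · by_cases hxu : x = u
      · rw [hxu, hu] at hx
        rw [hxu, ← Option.some_inj.mp hx]
        exact .refl u
      · exact .rel _ _ (Or.inl (by rwa [hAv x hxu]))
    · exact .rel _ _ (Or.inr hx)
  obtain ⟨t1, t2, t3, t4⟩ := ht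
  refine ⟨⟨hsymm, h2, h3, fun v hv => ⟨by rw [hAv v hv]; exact (h4 v).1, (h4 v).2⟩, hconn⟩,
    ?_, t2, ?_, t4⟩
  · rw [← t1]
    refine Nat.card_congr (Equiv.subtypeEquivRight fun v => ?_)
    constructor
    · rintro ⟨w, hvw, hw⟩
      have hvu : v ≠ u := by rintro rfl; rw [update_self] at hw; exact nomatch hw
      exact ⟨w, hvw, by rwa [hAv v hvu] at hw⟩
    · rintro ⟨w, hvw, hw⟩
      rcases eq_or_ne v u with rfl | hvu
      · rw [hu] at hw; exact absurd (Option.some_inj.mp hw) hvw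
      · exact ⟨w, hvw, by rwa [hAv v hvu]⟩
  · have key : ∀ v, A v = some v ↔ (update A u none v = some v ∨ v = u) := by
      intro v
      rcases eq_or_ne v u with rfl | hv
      · simp [hu]
      · simp [hAv v hv, hv]
    rw [Nat.card_congr (Equiv.subtypeEquivRight key),
      card_or_disj _ _ (fun a ha hau => by
        rw [hau, update_self] at ha; exact nomatch ha),
      card_eq_single] at t3
    omega

lemma case3_fwd (h : IsRootedRed A B v0) (ht : HasCombType A B k2 k3 l2 l3)
    (hA0 : A v0 ≠ none) (hB1 : B v0 = none) (hB2 : ∀ u, B u ≠ some v0) :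
    IsCycRed' A (update B v0 (some v0)) ∧
      HasCombType A (update B v0 (some v0)) k2 k3 l2 (l3 + 1) := by
  obtain ⟨h1, h2, h3, h4, h5⟩ := h
  have hBv : ∀ v, v ≠ v0 → update B v0 (some v0) v = B v := fun v hv => update_of_ne hv _ _
  have hinj : ∀ v w u, update B v0 (some v0) v = some u → update B v0 (some v0) w = some u →
      v = w := by
    intro v w u hv hw
    by_cases hvv : v = v0 <;> by_cases hww : w = v0
    · rw [hvv, hww]
    · rw [hvv, update_self] at hv
      rw [hBv w hww] at hw
      rw [← Option.some_inj.mp hv] at hw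
      exact absurd hw (hB2 w)
    · rw [hww, update_self] at hw
      rw [hBv v hvv] at hv
      rw [← Option.some_inj.mp hw] at hv
      exact absurd hv (hB2 v)
    · rw [hBv v hvv] at hv; rw [hBv w hww] at hw; exact h2 v w u hv hw
  have htri : ∀ v w u, update B v0 (some v0) v = some w → update B v0 (some v0) w = some u →
      update B v0 (some v0) u = some v := by
    intro v w u hv hw
    by_cases hvv : v = v0
    · rw [hvv, update_self] at hv
      have hwv : w = v0 := (Option.some_inj.mp hv).symm
      rw [hwv, update_self] at hw
      have huv : u = v0 := (Option.some_inj.mp hw).symm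
      rw [huv, update_self, hvv]
    · rw [hBv v hvv] at hv
      have hwv : w ≠ v0 := by rintro rfl; exact hB2 v hv
      rw [hBv w hwv] at hw
      have huv : u ≠ v0 := by rintro rfl; exact hB2 w hw
      rw [hBv u huv]
      exact h3 v w u hv hw
  have hadj : ∀ v, A v ≠ none ∧
      (update B v0 (some v0) v ≠ none ∨ ∃ u, update B v0 (some v0) u = some v) := by
    intro v
    by_cases hv : v = v0
    · exact ⟨hv ▸ hA0, Or.inl (by rw [hv, update_self]; exact fun h' => nomatch h')⟩
    · obtain ⟨ha, hb⟩ := h4 v hv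
      refine ⟨ha, ?_⟩
      rcases hb with hb | ⟨u, hu⟩
      · exact Or.inl (by rwa [hBv v hv])
      · have huv : u ≠ v0 := by rintro rfl; rw [hB1] at hu; exact nomatch hu
        exact Or.inr ⟨u, by rwa [hBv u huv]⟩
  have hconn : ∀ v w, EqvGen (fun x y => A x = some y ∨ update B v0 (some v0) x = some y) v w := by
    intro v w
    refine eqvGen_of_le ?_ (h5 v w)
    intro x y hxy
    refine EqvGen.rel _ _ ?_
    rcases hxy with hx | hx
    · exact Or.inl hx
    · right
      have hx0 : x ≠ v0 := by rintro rfl; rw [hB1] at hx; exact nomatch hx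
      rwa [hBv x hx0]
  obtain ⟨t1, t2, t3, t4⟩ := ht
  refine ⟨⟨h1, hinj, htri, hadj, hconn⟩, t1, ?_, t3, ?_⟩
  · rw [← t2]
    refine Nat.card_congr (Equiv.subtypeEquivRight fun v => ?_)
    constructor
    · rintro ⟨w, hvw, hw1, hw2⟩
      by_cases hv : v = v0
      · rw [hv, update_self] at hw1
        exact absurd (hv.trans (Option.some_inj.mp hw1)) hvw
      · rw [hBv v hv] at hw1
        have hwv : w ≠ v0 := by rintro rfl; exact hB2 v hw1
        rw [hBv w hwv] at hw2
        exact ⟨w, hvw, hw1, hw2⟩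
    · rintro ⟨w, hvw, hw1, hw2⟩
      have hv : v ≠ v0 := by rintro rfl; rw [hB1] at hw1; exact nomatch hw1
      have hwv : w ≠ v0 := by rintro rfl; exact hB2 v hw1
      exact ⟨w, hvw, by rwa [hBv v hv], by rwa [hBv w hwv]⟩
  · have key : ∀ v, update B v0 (some v0) v = some v ↔ (B v = some v ∨ v = v0) := by
      intro v
      by_cases hv : v = v0
      · rw [hv]; simp
      · simp [hBv v hv, hv]
    rw [Nat.card_congr (Equiv.subtypeEquivRight key),
      card_or_disj _ _ (fun a ha hav => by rw [hav, hB1] at ha; exact nomatch ha),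
      t4, card_eq_single]

lemma case3_bwd {u : Fin n} (h : IsCycRed' A B) (ht : HasCombType A B k2 k3 l2 (l3 + 1))
    (hu : B u = some u) :
    IsRootedRed A (update B u none) u ∧ HasCombType A (update B u none) k2 k3 l2 l3 := by
  obtain ⟨h1, h2, h3, h4, h5⟩ := h
  have hnot : ∀ v, v ≠ u → B v ≠ some u := fun v hv hvu => hv (h2 v u u hvu hu)
  have hBv : ∀ v, v ≠ u → update B u none v = B v := fun v hv => update_of_ne hv _ _
  have hinj : ∀ v w x, update B u none v = some x → update B u none w = some x → v = w := by
    intro v w x hv hw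
    have hvu : v ≠ u := by rintro h'; rw [h', update_self] at hv; exact nomatch hv
    have hwu : w ≠ u := by rintro h'; rw [h', update_self] at hw; exact nomatch hw
    rw [hBv v hvu] at hv; rw [hBv w hwu] at hw
    exact h2 v w x hv hw
  have htri : ∀ v w x, update B u none v = some w → update B u none w = some x →
      update B u none x = some v := by
    intro v w x hv hw
    have hvu : v ≠ u := by rintro h'; rw [h', update_self] at hv; exact nomatch hv
    have hwu : w ≠ u := by rintro h'; rw [h', update_self] at hw; exact nomatch hw
    rw [hBv v hvu] at hv; rw [hBv w hwu] at hw
    have hxw : x ≠ u := fun h' => hnot w hwu (h' ▸ hw)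
    rw [hBv x hxw]
    exact h3 v w x hv hw
  have hadj : ∀ v, v ≠ u → A v ≠ none ∧
      (update B u none v ≠ none ∨ ∃ w, update B u none w = some v) := by
    intro v hv
    obtain ⟨ha, hb⟩ := h4 v
    refine ⟨ha, ?_⟩
    rcases hb with hb | ⟨w, hw⟩
    · exact Or.inl (by rwa [hBv v hv])
    · have hwu : w ≠ u := by
        rintro rfl
        rw [hu] at hw
        exact hv (Option.some_inj.mp hw).symm
      exact Or.inr ⟨w, by rwa [hBv w hwu]⟩
  have hconn : ∀ v w, EqvGen (fun x y => A x = some y ∨ update B u none x = some y) v w := by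
    intro v w
    refine eqvGen_of_le ?_ (h5 v w)
    intro x y hxy
    rcases hxy with hx | hx
    · exact .rel _ _ (Or.inl hx)
    · by_cases hxu : x = u
      · rw [hxu, hu] at hx
        rw [hxu, ← Option.some_inj.mp hx]
        exact .refl u
      · exact .rel _ _ (Or.inr (by rwa [hBv x hxu]))
  obtain ⟨t1, t2, t3, t4⟩ := ht
  refine ⟨⟨h1, hinj, htri, hadj, hconn⟩, t1, ?_, t3, ?_⟩
  · rw [← t2]
    refine Nat.card_congr (Equiv.subtypeEquivRight fun v => ?_)
    constructor
    · rintro ⟨w, hvw, hw1, hw2⟩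
      have hvu : v ≠ u := by rintro h'; rw [h', update_self] at hw1; exact nomatch hw1
      rw [hBv v hvu] at hw1
      have hwu : w ≠ u := fun h' => hnot v hvu (h' ▸ hw1)
      rw [hBv w hwu] at hw2
      exact ⟨w, hvw, hw1, hw2⟩
    · rintro ⟨w, hvw, hw1, hw2⟩
      have hvu : v ≠ u := by
        rintro h'
        rw [h', hu] at hw1
        exact hvw (h'.trans (Option.some_inj.mp hw1))
      have hwu : w ≠ u := by rintro h'; rw [h'] at hw2; rw [hw2] at hu; exact nomatch hu
      exact ⟨w, hvw, by rwa [hBv v hvu], by rwa [hBv w hwu]⟩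
  · have key : ∀ v, B v = some v ↔ (update B u none v = some v ∨ v = u) := by
      intro v
      by_cases hv : v = u
      · rw [hv]; simp [hu]
      · simp [hBv v hv, hv]
    rw [Nat.card_congr (Equiv.subtypeEquivRight key),
      card_or_disj _ _ (fun a ha hau => by
        rw [hau, update_self] at ha; exact nomatch ha),
      card_eq_single] at t4
    omega

lemma case1_fwd (h : IsRootedRed A B v0) (hA : A v0 ≠ none)
    (hB : B v0 ≠ none ∨ ∃ u, B u = some v0) : IsCycRed' A B := by
  obtain ⟨h1, h2, h3, h4, h5⟩ := h
  refine ⟨h1, h2, h3, fun v => ?_, h5⟩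
  by_cases hv : v = v0
  · exact ⟨hv ▸ hA, hv ▸ hB⟩
  · exact h4 v hv

lemma case1_bwd (h : IsCycRed' A B) : IsRootedRed A B v0 :=
  ⟨h.1, h.2.1, h.2.2.1, fun v _ => h.2.2.2.1 v, h.2.2.2.2⟩

def prodSubtypeSigma {α β : Type} (p : α → Prop) (q : α → β → Prop) :
    {x : α × β // p x.1 ∧ q x.1 x.2} ≃ Σ a : {a // p a}, {b // q a.1 b} :=
  ⟨fun x => ⟨⟨x.1.1, x.2.1⟩, ⟨x.1.2, x.2.2⟩⟩, fun y => ⟨(y.1.1, y.2.1), y.1.2, y.2.2⟩,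
   fun _ => rfl, fun _ => rfl⟩


theorem stmt3 (n k2 k3 l2 l3 : ℕ) (hn : 2 ≤ n) :
    L n k2 k3 l2 l3 =
      n * s n k2 k3 l2 l3 + (l2 + 1) * s n k2 k3 (l2 + 1) l3 +
        (l3 + 1) * s n k2 k3 l2 (l3 + 1) := by
  classical
  set T := (Fin n → Option (Fin n)) × (Fin n → Option (Fin n)) × Fin n with hT
  set P : T → Prop := fun t => IsRootedRed t.1 t.2.1 t.2.2 ∧ HasCombType t.1 t.2.1 k2 k3 l2 l3
    with hP
  set bA : T → Prop := fun t => t.2.1 t.2.2 ≠ none ∨ ∃ u, t.2.1 u = some t.2.2 with hbA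
  set q1 : T → Prop := fun t => P t ∧ (t.1 t.2.2 ≠ none ∧ bA t) with hq1
  set q2 : T → Prop := fun t => P t ∧ t.1 t.2.2 = none with hq2
  set q3 : T → Prop := fun t => P t ∧ (t.1 t.2.2 ≠ none ∧ ¬ bA t) with hq3
  have hiff : ∀ t : T, P t ↔ (q1 t ∨ (q2 t ∨ q3 t)) := by
    intro t
    constructor
    · intro hPt
      by_cases hA : t.1 t.2.2 = none
      · exact Or.inr (Or.inl ⟨hPt, hA⟩)
      · by_cases hB : bA t
        · exact Or.inl ⟨hPt, hA, hB⟩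
        · exact Or.inr (Or.inr ⟨hPt, hA, hB⟩)
    · rintro (h | h | h) <;> exact h.1
  have hsplit : L n k2 k3 l2 l3 =
      Nat.card {t : T // q1 t} + (Nat.card {t : T // q2 t} + Nat.card {t : T // q3 t}) := by
    rw [L, Nat.card_congr (Equiv.subtypeEquivRight hiff),
      card_or_disj _ _ (fun t h1' h2' => by
        rcases h2' with h2' | h2'
        · exact h1'.2.1 h2'.2
        · exact h2'.2.2 h1'.2.2),
      card_or_disj _ _ (fun t h1' h2' => h2'.2.1 h1'.2)]
  -- case 1
  have hc1 : Nat.card {t : T // q1 t} = n * s n k2 k3 l2 l3 := by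
    have e1 : {t : T // q1 t} ≃
        {p : (Fin n → Option (Fin n)) × (Fin n → Option (Fin n)) //
          IsCycRed' p.1 p.2 ∧ HasCombType p.1 p.2 k2 k3 l2 l3} × Fin n :=
      { toFun := fun t => (⟨(t.1.1, t.1.2.1),
          case1_fwd t.2.1.1 t.2.2.1 t.2.2.2, t.2.1.2⟩, t.1.2.2),
        invFun := fun x => ⟨(x.1.1.1, x.1.1.2, x.2),
          ⟨case1_bwd x.1.2.1, x.1.2.2⟩, (x.1.2.1.2.2.2.1 x.2).1, (x.1.2.1.2.2.2.1 x.2).2⟩,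
        left_inv := fun t => rfl,
        right_inv := fun x => rfl }
    rw [Nat.card_congr e1, Nat.card_prod, Nat.card_eq_of_equiv_fin (Equiv.refl (Fin n))]
    exact mul_comm _ _
  -- case 2
  have hc2 : Nat.card {t : T // q2 t} = (l2 + 1) * s n k2 k3 (l2 + 1) l3 := by
    have e2 : {t : T // q2 t} ≃
        {x : ((Fin n → Option (Fin n)) × (Fin n → Option (Fin n))) × Fin n //
          (IsCycRed' x.1.1 x.1.2 ∧ HasCombType x.1.1 x.1.2 k2 k3 (l2 + 1) l3) ∧
            x.1.1 x.2 = some x.2} :=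
      { toFun := fun t => ⟨((update t.1.1 t.1.2.2 (some t.1.2.2), t.1.2.1), t.1.2.2), by
          obtain ⟨⟨A, B, v⟩, ⟨hR, hC⟩, hA⟩ := t
          exact ⟨case2_fwd hn hR hC hA, update_self _ _ _⟩⟩,
        invFun := fun x => ⟨(update x.1.1.1 x.1.2 none, x.1.1.2, x.1.2), by
          obtain ⟨⟨⟨A, B⟩, u⟩, ⟨hcyc, hC⟩, hu⟩ := x
          obtain ⟨hR, hC'⟩ := case2_bwd hcyc hC hu
          exact ⟨⟨hR, hC'⟩, update_self _ _ _⟩⟩,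
        left_inv := fun t => Subtype.ext (by
          obtain ⟨⟨A, B, v⟩, ⟨hR, hC⟩, hA⟩ := t
          have hA' : A v = none := hA
          show (update (update A v (some v)) v none, B, v) = (A, B, v)
          rw [Function.update_idem,
            show update A v none = A from Function.update_eq_self_iff.mpr hA'.symm]),
        right_inv := fun x => Subtype.ext (by
          obtain ⟨⟨⟨A, B⟩, u⟩, ⟨hcyc, hC⟩, hu⟩ := x
          have hu' : A u = some u := hu
          show ((update (update A u none) u (some u), B), u) = ((A, B), u)
          rw [Function.update_idem,
            show update A u (some u) = A from Function.update_eq_self_iff.mpr hu'.symm]) }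
    have key : Nat.card {x : ((Fin n → Option (Fin n)) × (Fin n → Option (Fin n))) × Fin n //
          (IsCycRed' x.1.1 x.1.2 ∧ HasCombType x.1.1 x.1.2 k2 k3 (l2 + 1) l3) ∧
            x.1.1 x.2 = some x.2} =
        Nat.card {a : (Fin n → Option (Fin n)) × (Fin n → Option (Fin n)) //
          IsCycRed' a.1 a.2 ∧ HasCombType a.1 a.2 k2 k3 (l2 + 1) l3} * (l2 + 1) := by
      refine Eq.trans (Nat.card_congr (prodSubtypeSigma
        (α := (Fin n → Option (Fin n)) × (Fin n → Option (Fin n))) (β := Fin n)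
        (fun a => IsCycRed' a.1 a.2 ∧ HasCombType a.1 a.2 k2 k3 (l2 + 1) l3)
        (fun a b => a.1 b = some b))) ?_
      exact card_sigma_const _ (l2 + 1) (fun a => a.2.2.2.2.1)
    exact ((Nat.card_congr e2).trans key).trans (mul_comm _ _)
  -- case 3
  have hc3 : Nat.card {t : T // q3 t} = (l3 + 1) * s n k2 k3 l2 (l3 + 1) := by
    have e3 : {t : T // q3 t} ≃
        {x : ((Fin n → Option (Fin n)) × (Fin n → Option (Fin n))) × Fin n //
          (IsCycRed' x.1.1 x.1.2 ∧ HasCombType x.1.1 x.1.2 k2 k3 l2 (l3 + 1)) ∧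
            x.1.2 x.2 = some x.2} :=
      { toFun := fun t => ⟨((t.1.1, update t.1.2.1 t.1.2.2 (some t.1.2.2)), t.1.2.2), by
          obtain ⟨⟨A, B, v⟩, ⟨hR, hC⟩, hA, hB⟩ := t
          have hB' : ¬ (B v ≠ none ∨ ∃ u, B u = some v) := hB
          rw [not_or, not_not, not_exists] at hB'
          exact ⟨case3_fwd hR hC hA hB'.1 hB'.2, update_self _ _ _⟩⟩,
        invFun := fun x => ⟨(x.1.1.1, update x.1.1.2 x.1.2 none, x.1.2), by
          obtain ⟨⟨⟨A, B⟩, u⟩, ⟨hcyc, hC⟩, hu⟩ := x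
          have hu' : B u = some u := hu
          obtain ⟨hR, hC'⟩ := case3_bwd hcyc hC hu'
          refine ⟨⟨hR, hC'⟩, (hcyc.2.2.2.1 u).1, ?_⟩
          show ¬ (update B u none u ≠ none ∨ ∃ w, update B u none w = some u)
          rw [not_or, not_not, not_exists]
          refine ⟨update_self _ _ _, fun w => ?_⟩
          by_cases hw : w = u
          · rw [hw, update_self]; exact fun h' => nomatch h'
          · rw [update_of_ne hw]
            exact fun h' => hw (hcyc.2.1 w u u h' hu')⟩,
        left_inv := fun t => Subtype.ext (by
          obtain ⟨⟨A, B, v⟩, ⟨hR, hC⟩, hA, hB⟩ := t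
          have hB' : ¬ (B v ≠ none ∨ ∃ u, B u = some v) := hB
          have hB1 : B v = none := not_not.mp (not_or.mp hB').1
          show (A, update (update B v (some v)) v none, v) = (A, B, v)
          rw [Function.update_idem,
            show update B v none = B from Function.update_eq_self_iff.mpr hB1.symm]),
        right_inv := fun x => Subtype.ext (by
          obtain ⟨⟨⟨A, B⟩, u⟩, ⟨hcyc, hC⟩, hu⟩ := x
          have hu' : B u = some u := hu
          show ((A, update (update B u none) u (some u)), u) = ((A, B), u)
          rw [Function.update_idem,
            show update B u (some u) = B from Function.update_eq_self_iff.mpr hu'.symm]) }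
    have key : Nat.card {x : ((Fin n → Option (Fin n)) × (Fin n → Option (Fin n))) × Fin n //
          (IsCycRed' x.1.1 x.1.2 ∧ HasCombType x.1.1 x.1.2 k2 k3 l2 (l3 + 1)) ∧
            x.1.2 x.2 = some x.2} =
        Nat.card {a : (Fin n → Option (Fin n)) × (Fin n → Option (Fin n)) //
          IsCycRed' a.1 a.2 ∧ HasCombType a.1 a.2 k2 k3 l2 (l3 + 1)} * (l3 + 1) := by
      refine Eq.trans (Nat.card_congr (prodSubtypeSigma
        (α := (Fin n → Option (Fin n)) × (Fin n → Option (Fin n))) (β := Fin n)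
        (fun a => IsCycRed' a.1 a.2 ∧ HasCombType a.1 a.2 k2 k3 l2 (l3 + 1))
        (fun a b => a.2 b = some b))) ?_
      exact card_sigma_const _ (l3 + 1) (fun a => a.2.2.2.2.2)
    exact ((Nat.card_congr e3).trans key).trans (mul_comm _ _)
  rw [hsplit, hc1, hc2, hc3]
  ring
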